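/- For every r ∈ (0, ∞) with r ∉ {R₁, R₂}, the following differential inequality holds: f'(r) κ(r) r + 2 σ² f''(r) ≤ −2 α M f'(r) − (ξ σ²/2)·𝟙(r < R₁) − (β σ²/2) f(r)·𝟙(r < R₂), where f' and f'' denote the first and second derivatives of f (which exist at all such r). -/

import Mathlib

open MeasureTheory intervalIntegral

/-- For every `r ∈ (0,∞)` with `r ∉ {R₁, R₂}`, the first and
second derivatives of `f` exist at `r` and satisfy the differential
inequality
`f'(r) κ(r) r + 2σ² f''(r) ≤ −2αM f'(r) − (ξσ²/2)·𝟙(r<R₁) − (βσ²/2) f(r)·𝟙(r<R₂)`. -/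
theorem stmt_5 (σ α M R₁ R₂ ξ β : ℝ) (κ h φ Φ g f : ℝ → ℝ)
    (hσ : 0 < σ) (hα : 0 ≤ α) (hM : 0 < M)
    (hR₁ : 0 < R₁) (hR₁₂ : R₁ ≤ R₂)
    (hκ_cont : ContinuousOn κ (Set.Ioi (0 : ℝ)))
    (hκ_nonneg : ∀ r : ℝ, 0 < r → 0 ≤ κ r)
    (hκ_int : IntervalIntegrable (fun s => s * κ s) volume 0 1)
    (hh : ∀ r, h r = (σ ^ 2)⁻¹ * ((1 / 2) * (∫ s in (0:ℝ)..r, s * κ s) + α * M * r))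
    (hφ : ∀ r, φ r = Real.exp (-h r))
    (hΦ : ∀ r, Φ r = ∫ s in (0:ℝ)..r, φ s)
    (hξ : ξ = (∫ s in (0:ℝ)..R₁, (φ s)⁻¹)⁻¹)
    (hβ : β = (∫ s in (0:ℝ)..R₂, Φ s / φ s)⁻¹)
    (hg : ∀ r, g r = 1 - (ξ / 4) * (∫ s in (0:ℝ)..(min r R₁), (φ s)⁻¹)
      - (β / 4) * (∫ s in (0:ℝ)..(min r R₂), Φ s / φ s))
    (hf : ∀ r, f r = ∫ s in (0:ℝ)..(min r R₂), φ s * g s) :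
    ∀ r : ℝ, 0 < r → r ≠ R₁ → r ≠ R₂ →
      DifferentiableAt ℝ f r ∧
      DifferentiableAt ℝ (deriv f) r ∧
      deriv f r * κ r * r + 2 * σ ^ 2 * deriv (deriv f) r ≤
        -(2 * α * M * deriv f r)
          - (ξ * σ ^ 2 / 2) * (if r < R₁ then (1:ℝ) else 0)
          - (β * σ ^ 2 / 2) * f r * (if r < R₂ then (1:ℝ) else 0) := by
  have hσ2 : (0:ℝ) < σ ^ 2 := by positivity
  have hσ2' : (σ:ℝ) ^ 2 ≠ 0 := ne_of_gt hσ2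
  have hφpos : ∀ x : ℝ, 0 < φ x := fun x => by rw [hφ]; exact Real.exp_pos _
  have hφne : ∀ x : ℝ, φ x ≠ 0 := fun x => (hφpos x).ne'
  have hR₂ : (0:ℝ) < R₂ := lt_of_lt_of_le hR₁ hR₁₂
  -- continuity and integrability of s ↦ s * κ s
  have hsκ_cont : ContinuousOn (fun s : ℝ => s * κ s) (Set.Ioi 0) :=
    (continuous_id.continuousOn).mul hκ_cont
  have hint_sκ : ∀ x : ℝ, 0 ≤ x → IntervalIntegrable (fun s => s * κ s) volume 0 x := by
    intro x hx
    rcases le_total x 1 with hx1 | hx1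
    · refine hκ_int.mono_set ?_
      rw [Set.uIcc_of_le hx, Set.uIcc_of_le (by norm_num : (0:ℝ) ≤ 1)]
      exact Set.Icc_subset_Icc le_rfl hx1
    · refine hκ_int.trans ?_
      refine (hsκ_cont.mono ?_).intervalIntegrable
      rw [Set.uIcc_of_le hx1]
      exact fun s hs => lt_of_lt_of_le one_pos hs.1
  -- continuity of the primitive of s κ s, hence of h and φ, on [0, x]
  have hH_cont : ∀ x : ℝ, 0 ≤ x →
      ContinuousOn (fun u => ∫ s in (0:ℝ)..u, s * κ s) (Set.Icc 0 x) := by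
    intro x hx
    have := intervalIntegral.continuousOn_primitive_interval'
      (hint_sκ x hx) (by rw [Set.uIcc_of_le hx]; exact Set.left_mem_Icc.2 hx)
    rwa [Set.uIcc_of_le hx] at this
  have hh_cont : ∀ x : ℝ, 0 ≤ x → ContinuousOn h (Set.Icc 0 x) := by
    intro x hx
    have : ContinuousOn (fun u => (σ ^ 2)⁻¹ * ((1 / 2) * (∫ s in (0:ℝ)..u, s * κ s) + α * M * u))
        (Set.Icc 0 x) :=
      (continuousOn_const.mul ((continuousOn_const.mul (hH_cont x hx)).add
        (continuousOn_const.mul continuous_id.continuousOn)))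
    exact this.congr fun u _ => hh u
  have hφ_cont : ∀ x : ℝ, 0 ≤ x → ContinuousOn φ (Set.Icc 0 x) := by
    intro x hx
    have : ContinuousOn (fun u => Real.exp (-h u)) (Set.Icc 0 x) :=
      (Real.continuous_exp.comp_continuousOn (hh_cont x hx).neg)
    exact this.congr fun u _ => hφ u
  have hφ_int : ∀ x : ℝ, 0 ≤ x → IntervalIntegrable φ volume 0 x := fun x hx =>
    (hφ_cont x hx).intervalIntegrable_of_Icc hx
  have hΦ_cont : ∀ x : ℝ, 0 ≤ x → ContinuousOn Φ (Set.Icc 0 x) := by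
    intro x hx
    have := intervalIntegral.continuousOn_primitive_interval'
      (hφ_int x hx) (by rw [Set.uIcc_of_le hx]; exact Set.left_mem_Icc.2 hx)
    rw [Set.uIcc_of_le hx] at this
    exact this.congr fun u _ => hΦ u
  have hΦ_nonneg : ∀ t : ℝ, 0 ≤ t → 0 ≤ Φ t := by
    intro t ht
    rw [hΦ]
    exact intervalIntegral.integral_nonneg ht fun s _ => (hφpos s).le
  have hinv_cont : ∀ x : ℝ, 0 ≤ x → ContinuousOn (fun s => (φ s)⁻¹) (Set.Icc 0 x) :=
    fun x hx => (hφ_cont x hx).inv₀ fun s _ => hφne s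
  have hinv_int : ∀ x : ℝ, 0 ≤ x → IntervalIntegrable (fun s => (φ s)⁻¹) volume 0 x :=
    fun x hx => (hinv_cont x hx).intervalIntegrable_of_Icc hx
  have hquot_cont : ∀ x : ℝ, 0 ≤ x → ContinuousOn (fun s => Φ s / φ s) (Set.Icc 0 x) :=
    fun x hx => (hΦ_cont x hx).div (hφ_cont x hx) fun s _ => hφne s
  have hquot_int : ∀ x : ℝ, 0 ≤ x → IntervalIntegrable (fun s => Φ s / φ s) volume 0 x :=
    fun x hx => (hquot_cont x hx).intervalIntegrable_of_Icc hx
  -- ξ, β nonnegative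
  have hξ0 : 0 ≤ ξ := by
    rw [hξ]
    exact inv_nonneg.2 (intervalIntegral.integral_nonneg hR₁.le
      fun t _ => inv_nonneg.2 (hφpos t).le)
  have hβ0 : 0 ≤ β := by
    rw [hβ]
    exact inv_nonneg.2 (intervalIntegral.integral_nonneg hR₂.le
      fun t ht => div_nonneg (hΦ_nonneg t ht.1) (hφpos t).le)
  -- g ≤ 1 on [0, ∞)
  have hg_le_one : ∀ s : ℝ, 0 ≤ s → g s ≤ 1 := by
    intro s hs
    rw [hg]
    have h1 : 0 ≤ ∫ t in (0:ℝ)..(min s R₁), (φ t)⁻¹ :=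
      intervalIntegral.integral_nonneg (le_min hs hR₁.le) fun t _ => inv_nonneg.2 (hφpos t).le
    have h2 : 0 ≤ ∫ t in (0:ℝ)..(min s R₂), Φ t / φ t :=
      intervalIntegral.integral_nonneg (le_min hs hR₂.le)
        fun t ht => div_nonneg (hΦ_nonneg t ht.1) (hφpos t).le
    nlinarith [mul_nonneg hξ0 h1, mul_nonneg hβ0 h2]
  -- continuity of g on [0, R₂]
  have hA_cont : ContinuousOn (fun t => ∫ s in (0:ℝ)..t, (φ s)⁻¹) (Set.Icc 0 R₂) := by
    have := intervalIntegral.continuousOn_primitive_interval'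
      (hinv_int R₂ hR₂.le) (by rw [Set.uIcc_of_le hR₂.le]; exact Set.left_mem_Icc.2 hR₂.le)
    rwa [Set.uIcc_of_le hR₂.le] at this
  have hB_cont : ContinuousOn (fun t => ∫ s in (0:ℝ)..t, Φ s / φ s) (Set.Icc 0 R₂) := by
    have := intervalIntegral.continuousOn_primitive_interval'
      (hquot_int R₂ hR₂.le) (by rw [Set.uIcc_of_le hR₂.le]; exact Set.left_mem_Icc.2 hR₂.le)
    rwa [Set.uIcc_of_le hR₂.le] at this
  have hg_cont : ContinuousOn g (Set.Icc 0 R₂) := by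
    have h1 : ContinuousOn (fun u => ∫ s in (0:ℝ)..(min u R₁), (φ s)⁻¹) (Set.Icc 0 R₂) :=
      hA_cont.comp ((continuous_id.min continuous_const).continuousOn)
        fun u hu => ⟨le_min hu.1 hR₁.le, le_trans (min_le_right _ _) hR₁₂⟩
    have h2 : ContinuousOn (fun u => ∫ s in (0:ℝ)..(min u R₂), Φ s / φ s) (Set.Icc 0 R₂) :=
      hB_cont.comp ((continuous_id.min continuous_const).continuousOn)
        fun u hu => ⟨le_min hu.1 hR₂.le, min_le_right _ _⟩
    exact (((continuousOn_const.sub (continuousOn_const.mul h1)).sub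
      (continuousOn_const.mul h2))).congr fun u _ => hg u
  have hφg_cont : ContinuousOn (fun s => φ s * g s) (Set.Icc 0 R₂) :=
    (hφ_cont R₂ hR₂.le).mul hg_cont
  have hφg_int : ∀ m : ℝ, 0 ≤ m → m ≤ R₂ →
      IntervalIntegrable (fun s => φ s * g s) volume 0 m := fun m hm hmR =>
    ((hφg_cont.mono (Set.Icc_subset_Icc le_rfl hmR)).intervalIntegrable_of_Icc hm)
  -- f ≤ Φ on [0, R₂]
  have hfleΦ : ∀ x : ℝ, 0 ≤ x → x ≤ R₂ → f x ≤ Φ x := by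
    intro x hx0 hxR
    rw [hf, hΦ, min_eq_left hxR]
    refine intervalIntegral.integral_mono_on hx0 (hφg_int x hx0 hxR) (hφ_int x hx0) ?_
    intro s hs
    exact mul_le_of_le_one_right (hφpos s).le (hg_le_one s hs.1)
  -- pointwise derivatives via FTC
  have hH_deriv : ∀ x : ℝ, 0 < x →
      HasDerivAt (fun u => ∫ s in (0:ℝ)..u, s * κ s) (x * κ x) x := by
    intro x hx
    exact intervalIntegral.integral_hasDerivAt_right (hint_sκ x hx.le)
      (hsκ_cont.stronglyMeasurableAtFilter isOpen_Ioi x hx)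
      (hsκ_cont.continuousAt (Ioi_mem_nhds hx))
  have hh_deriv : ∀ x : ℝ, 0 < x →
      HasDerivAt h ((σ ^ 2)⁻¹ * ((1 / 2) * (x * κ x) + α * M)) x := by
    intro x hx
    have h1 : HasDerivAt (fun u => (σ ^ 2)⁻¹ *
        ((1 / 2) * (∫ s in (0:ℝ)..u, s * κ s) + α * M * u))
        ((σ ^ 2)⁻¹ * ((1 / 2) * (x * κ x) + α * M * 1)) x :=
      (((hH_deriv x hx).const_mul (1/2 : ℝ)).add ((hasDerivAt_id x).const_mul (α * M))).const_mul _
    rw [mul_one] at h1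
    exact h1.congr_of_eventuallyEq (Filter.Eventually.of_forall fun u => hh u)
  have hφ_deriv : ∀ x : ℝ, 0 < x →
      HasDerivAt φ (-((σ ^ 2)⁻¹ * ((1 / 2) * (x * κ x) + α * M)) * φ x) x := by
    intro x hx
    have h1 : HasDerivAt (fun u => Real.exp (-h u))
        (Real.exp (-h x) * -((σ ^ 2)⁻¹ * ((1 / 2) * (x * κ x) + α * M))) x :=
      HasDerivAt.exp (hh_deriv x hx).neg
    have h2 := h1.congr_of_eventuallyEq (Filter.Eventually.of_forall fun u => hφ u)
    rw [← hφ x] at h2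
    exact h2.congr_deriv (by ring)
  have hφ_Ioi : ContinuousOn φ (Set.Ioi 0) :=
    fun x hx => ((hφ_deriv x hx).continuousAt).continuousWithinAt
  have hΦ_deriv : ∀ x : ℝ, 0 < x → HasDerivAt Φ (φ x) x := by
    intro x hx
    have h1 : HasDerivAt (fun u => ∫ s in (0:ℝ)..u, φ s) (φ x) x :=
      intervalIntegral.integral_hasDerivAt_right (hφ_int x hx.le)
        (hφ_Ioi.stronglyMeasurableAtFilter isOpen_Ioi x hx)
        (hφ_deriv x hx).continuousAt
    exact h1.congr_of_eventuallyEq (Filter.Eventually.of_forall fun u => hΦ u)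
  have hΦ_Ioi : ContinuousOn Φ (Set.Ioi 0) :=
    fun x hx => ((hΦ_deriv x hx).continuousAt).continuousWithinAt
  have hinv_Ioi : ContinuousOn (fun s => (φ s)⁻¹) (Set.Ioi 0) :=
    hφ_Ioi.inv₀ fun s hs => hφne s
  have hquot_Ioi : ContinuousOn (fun s => Φ s / φ s) (Set.Ioi 0) :=
    hΦ_Ioi.div hφ_Ioi fun s hs => hφne s
  have hA_deriv : ∀ x : ℝ, 0 < x →
      HasDerivAt (fun u => ∫ s in (0:ℝ)..u, (φ s)⁻¹) ((φ x)⁻¹) x := by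
    intro x hx
    exact intervalIntegral.integral_hasDerivAt_right (hinv_int x hx.le)
      (hinv_Ioi.stronglyMeasurableAtFilter isOpen_Ioi x hx)
      (((hφ_deriv x hx).continuousAt).inv₀ (hφne x))
  have hB_deriv : ∀ x : ℝ, 0 < x →
      HasDerivAt (fun u => ∫ s in (0:ℝ)..u, Φ s / φ s) (Φ x / φ x) x := by
    intro x hx
    exact intervalIntegral.integral_hasDerivAt_right (hquot_int x hx.le)
      (hquot_Ioi.stronglyMeasurableAtFilter isOpen_Ioi x hx)
      (((hΦ_deriv x hx).continuousAt).div ((hφ_deriv x hx).continuousAt) (hφne x))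
  -- derivative of f on (0, R₂)
  have hf_deriv : ∀ x : ℝ, 0 < x → x < R₂ → HasDerivAt f (φ x * g x) x := by
    intro x hx hxR
    have hF : HasDerivAt (fun u => ∫ s in (0:ℝ)..u, φ s * g s) (φ x * g x) x :=
      intervalIntegral.integral_hasDerivAt_right (hφg_int x hx.le hxR.le)
        (ContinuousOn.stronglyMeasurableAtFilter isOpen_Ioo
          (hφg_cont.mono Set.Ioo_subset_Icc_self) x ⟨hx, hxR⟩)
        (hφg_cont.continuousAt (Icc_mem_nhds hx hxR))
    refine hF.congr_of_eventuallyEq ?_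
    filter_upwards [Iio_mem_nhds hxR] with u hu
    rw [hf, min_eq_left (le_of_lt hu)]
  -- now the main goal
  intro r hr hne₁ hne₂
  rcases lt_trichotomy r R₂ with hrR₂ | hEq | hrR₂
  · -- r < R₂
    have hd1 : HasDerivAt f (φ r * g r) r := hf_deriv r hr hrR₂
    have hderivf_ev : deriv f =ᶠ[nhds r] fun u => φ u * g u := by
      filter_upwards [Ioo_mem_nhds hr hrR₂] with u hu
      exact (hf_deriv u hu.1 hu.2).deriv
    -- derivative of g at r, by cases
    have hrR₁' : r < R₁ ∨ R₁ < r := lt_or_gt_of_ne hne₁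
    rcases hrR₁' with hlt | hgt
    · -- case r < R₁
      have hgd : HasDerivAt g (-(ξ / 4) * (φ r)⁻¹ - (β / 4) * (Φ r / φ r)) r := by
        have h1 : HasDerivAt (fun u => (ξ / 4) * ∫ s in (0:ℝ)..u, (φ s)⁻¹)
            ((ξ / 4) * (φ r)⁻¹) r := (hA_deriv r hr).const_mul _
        have h2 : HasDerivAt (fun u => (β / 4) * ∫ s in (0:ℝ)..u, Φ s / φ s)
            ((β / 4) * (Φ r / φ r)) r := (hB_deriv r hr).const_mul _
        have h3 := (h1.const_sub 1).sub h2
        have h4 : HasDerivAt (fun u => 1 - (ξ / 4) * (∫ s in (0:ℝ)..u, (φ s)⁻¹)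
            - (β / 4) * (∫ s in (0:ℝ)..u, Φ s / φ s))
            (-((ξ / 4) * (φ r)⁻¹) - (β / 4) * (Φ r / φ r)) r := h3
        have h5 : g =ᶠ[nhds r] fun u => 1 - (ξ / 4) * (∫ s in (0:ℝ)..u, (φ s)⁻¹)
            - (β / 4) * (∫ s in (0:ℝ)..u, Φ s / φ s) := by
          filter_upwards [Iio_mem_nhds hlt] with u hu
          rw [hg, min_eq_left hu.le, min_eq_left (hu.le.trans hR₁₂)]
        have h6 := h4.congr_of_eventuallyEq h5
        exact h6.congr_deriv (by ring)
      have hd2 : HasDerivAt (deriv f)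
          (-((σ ^ 2)⁻¹ * ((1 / 2) * (r * κ r) + α * M)) * φ r * g r
            + φ r * (-(ξ / 4) * (φ r)⁻¹ - (β / 4) * (Φ r / φ r))) r := by
        have := (hφ_deriv r hr).mul hgd
        exact this.congr_of_eventuallyEq hderivf_ev
      refine ⟨hd1.differentiableAt, hd2.differentiableAt, ?_⟩
      rw [hd1.deriv, hd2.deriv, if_pos hlt, if_pos hrR₂]
      have hkey : φ r * g r * κ r * r + 2 * σ ^ 2 *
          (-((σ ^ 2)⁻¹ * ((1 / 2) * (r * κ r) + α * M)) * φ r * g r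
            + φ r * (-(ξ / 4) * (φ r)⁻¹ - (β / 4) * (Φ r / φ r)))
          = -(2 * α * M * (φ r * g r)) - ξ * σ ^ 2 / 2 - β * σ ^ 2 / 2 * Φ r := by
        field_simp [hφne r]
        ring
      rw [hkey]
      have hfr : f r ≤ Φ r := hfleΦ r hr.le hrR₂.le
      nlinarith [mul_nonneg (mul_nonneg hβ0 hσ2.le) (sub_nonneg.2 hfr)]
    · -- case R₁ < r < R₂
      have hgd : HasDerivAt g (-((β / 4) * (Φ r / φ r))) r := by
        have h2 : HasDerivAt (fun u => (β / 4) * ∫ s in (0:ℝ)..u, Φ s / φ s)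
            ((β / 4) * (Φ r / φ r)) r := (hB_deriv r hr).const_mul _
        have h4 : HasDerivAt (fun u => (1 - (ξ / 4) * (∫ s in (0:ℝ)..R₁, (φ s)⁻¹))
            - (β / 4) * (∫ s in (0:ℝ)..u, Φ s / φ s))
            (-((β / 4) * (Φ r / φ r))) r := by
          simpa using h2.const_sub (1 - (ξ / 4) * (∫ s in (0:ℝ)..R₁, (φ s)⁻¹))
        refine h4.congr_of_eventuallyEq ?_
        filter_upwards [Ioo_mem_nhds hgt hrR₂] with u hu
        rw [hg, min_eq_right hu.1.le, min_eq_left hu.2.le]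
      have hd2 : HasDerivAt (deriv f)
          (-((σ ^ 2)⁻¹ * ((1 / 2) * (r * κ r) + α * M)) * φ r * g r
            + φ r * (-((β / 4) * (Φ r / φ r)))) r := by
        have := (hφ_deriv r hr).mul hgd
        exact this.congr_of_eventuallyEq hderivf_ev
      refine ⟨hd1.differentiableAt, hd2.differentiableAt, ?_⟩
      rw [hd1.deriv, hd2.deriv, if_neg (not_lt.2 hgt.le), if_pos hrR₂]
      have hkey : φ r * g r * κ r * r + 2 * σ ^ 2 *
          (-((σ ^ 2)⁻¹ * ((1 / 2) * (r * κ r) + α * M)) * φ r * g r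
            + φ r * (-((β / 4) * (Φ r / φ r))))
          = -(2 * α * M * (φ r * g r)) - β * σ ^ 2 / 2 * Φ r := by
        field_simp [hφne r]
        ring
      rw [hkey]
      have hfr : f r ≤ Φ r := hfleΦ r hr.le hrR₂.le
      nlinarith [mul_nonneg (mul_nonneg hβ0 hσ2.le) (sub_nonneg.2 hfr)]
  · exact absurd hEq hne₂
  · -- r > R₂
    have hd1 : HasDerivAt f 0 r := by
      refine (hasDerivAt_const r (∫ s in (0:ℝ)..R₂, φ s * g s)).congr_of_eventuallyEq ?_
      filter_upwards [Ioi_mem_nhds hrR₂] with u hu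
      rw [hf, min_eq_right (le_of_lt hu)]
    have hdf0 : deriv f =ᶠ[nhds r] fun _ => (0:ℝ) := by
      filter_upwards [Ioi_mem_nhds hrR₂] with u hu
      have hev : f =ᶠ[nhds u] fun _ => ∫ s in (0:ℝ)..R₂, φ s * g s := by
        filter_upwards [Ioi_mem_nhds hu] with v hv
        rw [hf, min_eq_right hv.le]
      rw [hev.deriv_eq, deriv_const]
    have hd2 : HasDerivAt (deriv f) 0 r :=
      (hasDerivAt_const r (0:ℝ)).congr_of_eventuallyEq hdf0
    refine ⟨hd1.differentiableAt, hd2.differentiableAt, ?_⟩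
    rw [hd1.deriv, hd2.deriv, if_neg (by linarith), if_neg (not_lt.2 hrR₂.le)]
    simp
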